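/- For every real z with 0 < z < 1/12, the series ∑_{p=0}^∞ Z(p+1)·z^p converges and its sum equals 1/2 + ((1 − 12z)^{3/2} − 1)/(24·√3·z). -/

import Mathlib

/-- The partition function of critical Boltzmann triangulations of the p-gon:
Z(1) = (2−√3)/4 and Z(p) = 6^p·(2p−5)!!/(8·√3·p!) for p ≥ 2,
with (2p−5)!! read as 1 when p = 2 (natural subtraction gives 0!! = 1). -/
noncomputable def Zfun (p : ℕ) : ℝ :=
  if p = 1 then (2 - Real.sqrt 3) / 4
  else 6 ^ p * (Nat.doubleFactorial (2 * p - 5) : ℝ) / (8 * Real.sqrt 3 * (Nat.factorial p : ℝ))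

open Real Set

lemma dfact_step (m : ℕ) :
    Nat.doubleFactorial (2*m+1) = (2*m+1) * Nat.doubleFactorial (2*m-1) := by
  cases m with
  | zero => simp [Nat.doubleFactorial]
  | succ k =>
    have h1 : 2*(k+1)+1 = (2*k+1)+2 := by omega
    have h2 : 2*(k+1)-1 = 2*k+1 := by omega
    rw [h1, h2, Nat.doubleFactorial]

lemma dfact_le (m : ℕ) : Nat.doubleFactorial (2*m-1) ≤ 2^m * m.factorial := by
  induction m with
  | zero => simp [Nat.doubleFactorial]
  | succ k ih =>
    have h2 : 2*(k+1)-1 = 2*k+1 := by omega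
    rw [h2, dfact_step]
    calc (2*k+1) * Nat.doubleFactorial (2*k-1) ≤ (2*(k+1)) * (2^k * k.factorial) := by
          exact Nat.mul_le_mul (by omega) ih
      _ = 2^(k+1) * (k+1).factorial := by
          rw [Nat.factorial_succ]; ring

noncomputable def cc (n : ℕ) : ℝ :=
  if n = 0 then 1 else if n = 1 then -18
  else 3 * 6^n * (Nat.doubleFactorial (2*n-5) : ℝ) / (Nat.factorial n : ℝ)

lemma cc_zero : cc 0 = 1 := by simp [cc]

lemma cc_rec (n : ℕ) : ((n:ℝ)+1) * cc (n+1) = (12*(n:ℝ) - 18) * cc n := by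
  match n with
  | 0 => norm_num [cc]
  | 1 => norm_num [cc, Nat.doubleFactorial, Nat.factorial]
  | (m+2) =>
    have e1 : 2*(m+3)-5 = 2*m+1 := by omega
    have e2 : 2*(m+2)-5 = 2*m-1 := by omega
    simp only [cc, if_neg (by omega : ¬ m+3 = 0), if_neg (by omega : ¬ m+3 = 1),
      if_neg (by omega : ¬ m+2 = 0), if_neg (by omega : ¬ m+2 = 1)]
    rw [show m+2+1 = m+3 from rfl, e1, e2, dfact_step, Nat.factorial_succ (m+2)]
    have hf : ((m+2).factorial : ℝ) ≠ 0 := Nat.cast_ne_zero.2 (Nat.factorial_ne_zero _)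
    push_cast
    field_simp
    ring

lemma cc_bound (n : ℕ) : |cc n| ≤ 3 * 12^n := by
  match n with
  | 0 => norm_num [cc]
  | 1 => norm_num [cc]
  | (m+2) =>
    have e2 : 2*(m+2)-5 = 2*m-1 := by omega
    simp only [cc, if_neg (by omega : ¬ m+2 = 0), if_neg (by omega : ¬ m+2 = 1), e2]
    have hdf : (Nat.doubleFactorial (2*m-1) : ℝ) ≤ 2^m * m.factorial := by
      exact_mod_cast Nat.cast_le.2 (dfact_le m)
    have hfle : (m.factorial : ℝ) ≤ (m+2).factorial := by
      exact_mod_cast Nat.factorial_le (by omega)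
    have hfpos : (0:ℝ) < (m+2).factorial := by positivity
    have hnn : (0:ℝ) ≤ 3 * 6^(m+2) * (Nat.doubleFactorial (2*m-1) : ℝ) / (Nat.factorial (m+2) : ℝ) := by
      positivity
    rw [abs_of_nonneg hnn, div_le_iff₀ hfpos]
    calc 3 * 6^(m+2) * (Nat.doubleFactorial (2*m-1) : ℝ)
        ≤ 3 * 6^(m+2) * (2^m * m.factorial) := by gcongr
      _ ≤ 3 * 6^(m+2) * (2^(m+2) * (m+2).factorial) := by
          gcongr
          · norm_num
          · omega
      _ = 3 * 12^(m+2) * (m+2).factorial := by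
          rw [show (12:ℝ) = 6*2 by norm_num, mul_pow]; ring
lemma cc_hasSum {x : ℝ} (hx0 : 0 ≤ x) (hx : x < 1/12) :
    HasSum (fun n => cc n * x^n) ((1 - 12*x) ^ ((3:ℝ)/2)) := by
  set r : ℝ := x/2 + 1/24 with hrdef
  have hr0 : 0 < r := by positivity
  have hxr : x < r := by rw [hrdef]; linarith
  have hr1 : 12 * r < 1 := by rw [hrdef]; linarith
  have h0t : (0:ℝ) ∈ Ioo (-r) r := ⟨by linarith, hr0⟩
  have hxt : x ∈ Ioo (-r) r := ⟨by linarith, hxr⟩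
  set u : ℕ → ℝ := fun n => 3 * 12^n * n * r^(n-1) with hudef
  have hu : Summable u := by
    rw [← summable_nat_add_iff 1]
    have h12r : ‖12 * r‖ < 1 := by rw [norm_of_nonneg (by positivity)]; exact hr1
    have A : Summable (fun n : ℕ => (n:ℝ)^1 * (12*r)^n) :=
      summable_pow_mul_geometric_of_norm_lt_one 1 h12r
    have B : Summable (fun n : ℕ => (12*r)^n) :=
      summable_geometric_of_lt_one (by positivity) hr1
    apply ((A.add B).mul_left 36).congr
    intro n
    simp only [hudef, pow_one, mul_pow]
    push_cast
    ring
  have hbound : ∀ (n : ℕ) (y : ℝ), y ∈ Ioo (-r) r → ‖cc n * ((n:ℝ) * y^(n-1))‖ ≤ u n := by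
    intro n y hy
    have hyr : |y| ≤ r := by rw [abs_le]; exact ⟨(hy.1).le, hy.2.le⟩
    have h1 : |y|^(n-1) ≤ r^(n-1) := pow_le_pow_left₀ (abs_nonneg y) hyr _
    calc ‖cc n * ((n:ℝ) * y^(n-1))‖ = |cc n| * ((n:ℝ) * |y|^(n-1)) := by
          rw [Real.norm_eq_abs, abs_mul, abs_mul, Nat.abs_cast, abs_pow]
      _ ≤ (3 * 12^n) * ((n:ℝ) * r^(n-1)) := by
          apply mul_le_mul (cc_bound n) _ (by positivity) (by positivity)
          exact mul_le_mul_of_nonneg_left h1 (Nat.cast_nonneg n)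
      _ = u n := by rw [hudef]; ring
  have hderiv : ∀ (n : ℕ) (y : ℝ), y ∈ Ioo (-r) r →
      HasDerivAt (fun w => cc n * w^n) (cc n * ((n:ℝ) * y^(n-1))) y := by
    intro n y _
    exact (hasDerivAt_pow n y).const_mul (cc n)
  have hg0 : Summable (fun n => cc n * (0:ℝ)^n) := by
    apply summable_of_ne_finset_zero (s := {0})
    intro n hn
    have : n ≠ 0 := by simpa using hn
    simp [zero_pow this]
  have hFd : ∀ y ∈ Ioo (-r) r,
      HasDerivAt (fun w => ∑' n, cc n * w^n) (∑' n, cc n * ((n:ℝ) * y^(n-1))) y := by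
    intro y hy
    exact hasDerivAt_tsum_of_isPreconnected hu isOpen_Ioo (convex_Ioo _ _).isPreconnected
      hderiv hbound h0t hg0 hy
  have hgsum : ∀ y ∈ Ioo (-r) r, Summable (fun n => cc n * y^n) := by
    intro y hy
    apply Summable.of_norm_bounded
      ((summable_geometric_of_lt_one (by positivity) hr1).mul_left 3)
    intro n
    have hyr : |y| ≤ r := by rw [abs_le]; exact ⟨(hy.1).le, hy.2.le⟩
    calc ‖cc n * y^n‖ = |cc n| * |y|^n := by
          rw [Real.norm_eq_abs, abs_mul, abs_pow]
      _ ≤ (3 * 12^n) * r^n :=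
          mul_le_mul (cc_bound n) (pow_le_pow_left₀ (abs_nonneg y) hyr _)
            (by positivity) (by positivity)
      _ = 3 * (12*r)^n := by rw [mul_pow]; ring
  have hg'sum : ∀ y ∈ Ioo (-r) r, Summable (fun n => cc n * ((n:ℝ) * y^(n-1))) :=
    fun y hy => Summable.of_norm_bounded hu (fun n => hbound n y hy)
  -- The ODE satisfied by the sum
  have hODE : ∀ y ∈ Ioo (-r) r,
      (1 - 12*y) * (∑' n, cc n * ((n:ℝ) * y^(n-1))) = -18 * ∑' n, cc n * y^n := by
    intro y hy
    have hS' := hg'sum y hy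
    have hS := hgsum y hy
    have hs1 : Summable (fun m : ℕ => (m:ℝ) * cc m * y^m) := by
      apply (hS'.mul_left y).congr
      intro n
      cases n with
      | zero => simp
      | succ k =>
        simp only [Nat.add_sub_cancel]
        push_cast
        rw [pow_succ]
        ring
    have hts1 : ∑' m : ℕ, (m:ℝ) * cc m * y^m = y * ∑' n, cc n * ((n:ℝ) * y^(n-1)) := by
      rw [← tsum_mul_left]
      apply tsum_congr
      intro n
      cases n with
      | zero => simp
      | succ k =>
        simp only [Nat.add_sub_cancel]
        push_cast
        rw [pow_succ]
        ring
    have step1 : ∑' n, cc n * ((n:ℝ) * y^(n-1))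
        = ∑' m : ℕ, cc (m+1) * (((m:ℝ)+1) * y^m) := by
      rw [Summable.tsum_eq_zero_add hS']
      simp only [Nat.cast_zero, zero_mul, mul_zero, zero_add, Nat.add_sub_cancel]
      push_cast
      rfl
    have step2 : ∑' m : ℕ, cc (m+1) * (((m:ℝ)+1) * y^m)
        = ∑' m : ℕ, (12 * ((m:ℝ) * cc m * y^m) - 18 * (cc m * y^m)) := by
      apply tsum_congr
      intro m
      have h := cc_rec m
      calc cc (m+1) * (((m:ℝ)+1) * y^m) = (((m:ℝ)+1) * cc (m+1)) * y^m := by ring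
        _ = ((12*(m:ℝ) - 18) * cc m) * y^m := by rw [h]
        _ = 12 * ((m:ℝ) * cc m * y^m) - 18 * (cc m * y^m) := by ring
    have step3 : ∑' m : ℕ, (12 * ((m:ℝ) * cc m * y^m) - 18 * (cc m * y^m))
        = 12 * (y * ∑' n, cc n * ((n:ℝ) * y^(n-1))) - 18 * ∑' n, cc n * y^n := by
      rw [Summable.tsum_sub (hs1.mul_left 12) (hS.mul_left 18), tsum_mul_left, tsum_mul_left, hts1]
    have := step1.trans (step2.trans step3)
    linarith [this]
  -- derivative of the comparison function
  have hq : ∀ y ∈ Ioo (-r) r,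
      HasDerivAt (fun w => (1 - 12*w) ^ (-(3/2) : ℝ)) (18 * (1-12*y) ^ (-(5/2) : ℝ)) y := by
    intro y hy
    have hw : 0 < 1 - 12*y := by have := hy.2; nlinarith
    have h1 : HasDerivAt (fun w : ℝ => 1 - 12*w) (-12) y := by
      simpa using ((hasDerivAt_id y).const_mul (12:ℝ)).const_sub (1:ℝ)
    have h2 := h1.rpow_const (p := (-(3/2) : ℝ)) (Or.inl hw.ne')
    convert h2 using 1
    rw [show ((-(3/2) : ℝ) - 1) = (-(5/2) : ℝ) by norm_num]
    ring
  have hH0 : ∀ y ∈ Ioo (-r) r,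
      HasDerivAt (fun w => (∑' n, cc n * w^n) * (1 - 12*w) ^ (-(3/2) : ℝ)) 0 y := by
    intro y hy
    have hw : 0 < 1 - 12*y := by have := hy.2; nlinarith
    have hd := (hFd y hy).mul (hq y hy)
    have hsplit : (1-12*y) ^ (-(3/2) : ℝ) = (1-12*y) * (1-12*y) ^ (-(5/2) : ℝ) := by
      have h := Real.rpow_add hw 1 (-(5/2) : ℝ)
      norm_num at h
      exact h
    refine hd.congr_deriv (Eq.symm ?_)
    rw [hsplit]
    have hO := hODE y hy
    linear_combination (-( (1-12*y) ^ (-(5/2) : ℝ))) * hO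
  -- constancy on [0, x]
  have hsub : Icc (0:ℝ) x ⊆ Ioo (-r) r := by
    intro y hy
    exact ⟨by have := hy.1; linarith, by have := hy.2; linarith⟩
  have hcont : ContinuousOn (fun w => (∑' n, cc n * w^n) * (1 - 12*w) ^ (-(3/2) : ℝ))
      (Icc 0 x) := fun y hy => (hH0 y (hsub hy)).continuousAt.continuousWithinAt
  have hder : ∀ y ∈ Ico (0:ℝ) x,
      HasDerivWithinAt (fun w => (∑' n, cc n * w^n) * (1 - 12*w) ^ (-(3/2) : ℝ)) 0 (Ici y) y :=
    fun y hy => (hH0 y (hsub ⟨hy.1, hy.2.le⟩)).hasDerivWithinAt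
  have key := constant_of_has_deriv_right_zero hcont hder x (right_mem_Icc.mpr hx0)
  have hF0 : (∑' n, cc n * (0:ℝ)^n) = 1 := by
    rw [(hasSum_single 0 (fun b hb => by simp [zero_pow hb])).tsum_eq]
    simp [cc_zero]
  rw [hF0] at key
  norm_num [Real.one_rpow] at key
  -- conclude
  have hw : 0 < 1 - 12*x := by linarith
  have hinv : (1-12*x) ^ (-(3/2) : ℝ) * (1-12*x) ^ ((3:ℝ)/2) = 1 := by
    rw [← Real.rpow_add hw]
    norm_num
  have hFx : (∑' n, cc n * x^n) = (1 - 12*x) ^ ((3:ℝ)/2) := by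
    calc (∑' n, cc n * x^n)
        = (∑' n, cc n * x^n) * ((1-12*x) ^ (-(3/2) : ℝ) * (1-12*x) ^ ((3:ℝ)/2)) := by
          rw [hinv, mul_one]
      _ = ((∑' n, cc n * x^n) * (1-12*x) ^ (-(3/2) : ℝ)) * (1-12*x) ^ ((3:ℝ)/2) := by ring
      _ = 1 * (1-12*x) ^ ((3:ℝ)/2) := by rw [key]
      _ = (1-12*x) ^ ((3:ℝ)/2) := by rw [one_mul]
  rw [← hFx]
  exact (hgsum x hxt).hasSum


/-- For 0 < z < 1/12, the series ∑ Z(p+1)·z^p converges with sum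
1/2 + ((1 − 12z)^{3/2} − 1)/(24·√3·z). -/
theorem Z_generating_function (z : ℝ) (hz0 : 0 < z) (hz1 : z < 1 / 12) :
    HasSum (fun p : ℕ => Zfun (p + 1) * z ^ p)
      (1 / 2 + ((1 - 12 * z) ^ (3 / 2 : ℝ) - 1) / (24 * Real.sqrt 3 * z)) := by
  have hs3 : Real.sqrt 3 * Real.sqrt 3 = 3 := Real.mul_self_sqrt (by norm_num)
  have hs3ne : Real.sqrt 3 ≠ 0 := by positivity
  have hzne : z ≠ 0 := hz0.ne'
  have hS : HasSum (fun n => cc n * z^n) ((1 - 12*z) ^ ((3:ℝ)/2)) :=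
    cc_hasSum hz0.le (by linarith)
  have h1 : HasSum (fun p => cc (p+1) * z^(p+1)) ((1 - 12*z) ^ ((3:ℝ)/2) - 1) := by
    refine (hasSum_nat_add_iff (f := fun n => cc n * z^n) 1).mpr ?_
    have e : ((1 - 12*z) ^ ((3:ℝ)/2) - 1) + ∑ i ∈ Finset.range 1, cc i * z^i
        = (1 - 12*z) ^ ((3:ℝ)/2) := by simp [cc_zero]
    rw [e]
    exact hS
  have h2 := h1.mul_left (24 * Real.sqrt 3 * z)⁻¹
  have h3 : HasSum (fun p : ℕ => if p = 0 then (1/2:ℝ) else 0) (1/2) :=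
    hasSum_ite_eq 0 (1/2)
  have h4 := h2.add h3
  have e : ∀ p : ℕ, Zfun (p+1) * z^p
      = (24 * Real.sqrt 3 * z)⁻¹ * (cc (p+1) * z^(p+1)) + (if p = 0 then (1/2:ℝ) else 0) := by
    intro p
    cases p with
    | zero =>
      simp only [Zfun, cc, if_pos rfl, if_neg (by norm_num : ¬ (0:ℕ)+1 = 0), pow_zero,
        pow_one, mul_one]
      simp only [zero_add, eq_self_iff_true, if_true]
      field_simp
      nlinarith [hs3, Real.sqrt_nonneg 3]
    | succ q =>
      simp only [Zfun, cc, if_neg (by omega : ¬ q+1+1 = 1), if_neg (by omega : ¬ q+1+1 = 0),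
        if_neg (by omega : ¬ q+1 = 0), if_neg (by omega : ¬ q+1+1 = 1), add_zero]
      rw [pow_succ z (q+1)]
      have hfne : ((q+2).factorial : ℝ) ≠ 0 := Nat.cast_ne_zero.2 (Nat.factorial_ne_zero _)
      field_simp
      ring
  have h5 : HasSum (fun p : ℕ => Zfun (p+1) * z^p)
      ((24 * Real.sqrt 3 * z)⁻¹ * ((1 - 12*z) ^ ((3:ℝ)/2) - 1) + 1/2) :=
    (funext e : (fun p : ℕ => Zfun (p+1) * z^p) = _) ▸ h4
  have efin : (24 * Real.sqrt 3 * z)⁻¹ * ((1 - 12*z) ^ ((3:ℝ)/2) - 1) + 1/2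
      = 1/2 + ((1 - 12*z) ^ ((3:ℝ)/2) - 1) / (24 * Real.sqrt 3 * z) := by
    rw [div_eq_inv_mul]; ring
  exact efin ▸ h5
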